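/- Let V be a 2n×2n real positive definite matrix and Ω the standard symplectic form. Then V satisfies V + iΩ ≥ 0 (as a complex Hermitian matrix) if and only if V ≥ V # (Ωᵀ V⁻¹ Ω) in the Löwner order. -/

import Mathlib

open Matrix
open scoped ComplexOrder

/-- Total matrix square root: the PSD square root on PSD matrices, `0` elsewhere. -/
noncomputable def msqrt {𝕜 : Type*} [RCLike 𝕜] {n : Type*} [Fintype n] [DecidableEq n]
    (A : Matrix n n 𝕜) : Matrix n n 𝕜 :=
  letI := Classical.dec A.PosSemidef
  if h : A.PosSemidef then
    h.1.eigenvectorUnitary.1 * diagonal ((↑) ∘ (Real.sqrt ∘ h.1.eigenvalues)) *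
      (star h.1.eigenvectorUnitary : Matrix n n 𝕜)
  else 0

/-- The matrix geometric mean `A # B = A^{1/2} (A^{-1/2} B A^{-1/2})^{1/2} A^{1/2}`. -/
noncomputable def geomMean {𝕜 : Type*} [RCLike 𝕜] {n : Type*} [Fintype n] [DecidableEq n]
    (A B : Matrix n n 𝕜) : Matrix n n 𝕜 :=
  msqrt A * msqrt ((msqrt A)⁻¹ * B * (msqrt A)⁻¹) * msqrt A

/-- The standard symplectic form `Ω = [[0, I],[-I, 0]]` in position-momentum ordering. -/
def symForm (n : ℕ) : Matrix (Fin n ⊕ Fin n) (Fin n ⊕ Fin n) ℝ :=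
  Matrix.fromBlocks 0 1 (-1) 0

/-- The PSD square root (the definition of the older Mathlib). -/
noncomputable def Matrix.PosSemidef.sqrt {𝕜 : Type*} [RCLike 𝕜] {n : Type*} [Fintype n]
    [DecidableEq n] {A : Matrix n n 𝕜} (hA : A.PosSemidef) : Matrix n n 𝕜 :=
  hA.1.eigenvectorUnitary.1 * diagonal ((↑) ∘ (Real.sqrt ∘ hA.1.eigenvalues)) *
    (star hA.1.eigenvectorUnitary : Matrix n n 𝕜)

section helpers
variable {𝕜 : Type*} [RCLike 𝕜] {m : Type*} [Fintype m] [DecidableEq m]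

lemma psd_conj_iff (B : Matrix m m 𝕜) (hB : IsUnit B.det) (A : Matrix m m 𝕜) :
    (B * A * Bᴴ).PosSemidef ↔ A.PosSemidef := by
  constructor
  · intro h
    have hBH : IsUnit Bᴴ.det := by
      rw [Matrix.det_conjTranspose]; exact hB.star
    have h2 := h.mul_mul_conjTranspose_same B⁻¹
    have e : B⁻¹ * (B * A * Bᴴ) * B⁻¹ᴴ = A := by
      rw [Matrix.conjTranspose_nonsing_inv]
      have : B⁻¹ * (B * A * Bᴴ) * Bᴴ⁻¹ = (B⁻¹ * B) * A * (Bᴴ * Bᴴ⁻¹) := by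
        simp only [Matrix.mul_assoc]
      rw [this, Matrix.nonsing_inv_mul _ hB, Matrix.mul_nonsing_inv _ hBH, Matrix.one_mul,
        Matrix.mul_one]
    rwa [e] at h2
  · intro h; exact h.mul_mul_conjTranspose_same B

lemma unitary_conj_psd_iff (U : Matrix.unitaryGroup m 𝕜) (d : m → ℝ) :
    ((U : Matrix m m 𝕜) * Matrix.diagonal (RCLike.ofReal ∘ d) * star (U : Matrix m m 𝕜)).PosSemidef
      ↔ ∀ i, 0 ≤ d i := by
  have hdet : IsUnit (U : Matrix m m 𝕜).det :=
    Matrix.isUnit_det_of_right_inverse (Matrix.mem_unitaryGroup_iff.mp U.2)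
  rw [show star (U : Matrix m m 𝕜) = (U : Matrix m m 𝕜)ᴴ from rfl, psd_conj_iff _ hdet,
    Matrix.posSemidef_diagonal_iff]
  simp [RCLike.ofReal_nonneg]

lemma Matrix.PosSemidef.posSemidef_sqrt {A : Matrix m m 𝕜} (hA : A.PosSemidef) :
    hA.sqrt.PosSemidef := by
  unfold Matrix.PosSemidef.sqrt
  exact (unitary_conj_psd_iff _ (Real.sqrt ∘ hA.1.eigenvalues)).mpr fun i => Real.sqrt_nonneg _

lemma Matrix.PosSemidef.sqrt_mul_self {A : Matrix m m 𝕜} (hA : A.PosSemidef) :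
    hA.sqrt * hA.sqrt = A := by
  have hUU : star (hA.1.eigenvectorUnitary : Matrix m m 𝕜) * (hA.1.eigenvectorUnitary : Matrix m m 𝕜) = 1 :=
    Matrix.mem_unitaryGroup_iff'.mp hA.1.eigenvectorUnitary.2
  conv_rhs => rw [hA.1.spectral_theorem, Unitary.conjStarAlgAut_apply]
  unfold Matrix.PosSemidef.sqrt
  calc _ = (hA.1.eigenvectorUnitary : Matrix m m 𝕜) * (diagonal (RCLike.ofReal ∘ (Real.sqrt ∘ hA.1.eigenvalues))
        * (star (hA.1.eigenvectorUnitary : Matrix m m 𝕜) * (hA.1.eigenvectorUnitary : Matrix m m 𝕜))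
        * diagonal (RCLike.ofReal ∘ (Real.sqrt ∘ hA.1.eigenvalues)))
        * star (hA.1.eigenvectorUnitary : Matrix m m 𝕜) := by simp only [Matrix.mul_assoc]
    _ = _ := by
      rw [hUU, Matrix.mul_one, diagonal_mul_diagonal]
      congr 3; funext i
      simp [← RCLike.ofReal_mul, Real.mul_self_sqrt (hA.eigenvalues_nonneg i)]

lemma one_eq_unitary_conj (U : Matrix.unitaryGroup m 𝕜) :
    (1 : Matrix m m 𝕜) =
      (U : Matrix m m 𝕜) * Matrix.diagonal (RCLike.ofReal ∘ fun _ : m => (1:ℝ)) * star (U : Matrix m m 𝕜) := by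
  have : Matrix.diagonal (RCLike.ofReal ∘ fun _ : m => (1:ℝ)) = (1 : Matrix m m 𝕜) := by
    simp [Function.comp_def, Matrix.diagonal_one]
  rw [this, Matrix.mul_one, Matrix.mem_unitaryGroup_iff.mp U.2]

lemma unitary_conj_sub (U : Matrix.unitaryGroup m 𝕜) (d e : m → ℝ) :
    (U : Matrix m m 𝕜) * Matrix.diagonal (RCLike.ofReal ∘ d) * star (U : Matrix m m 𝕜)
      - (U : Matrix m m 𝕜) * Matrix.diagonal (RCLike.ofReal ∘ e) * star (U : Matrix m m 𝕜)
      = (U : Matrix m m 𝕜) * Matrix.diagonal (RCLike.ofReal ∘ fun i => d i - e i) * star (U : Matrix m m 𝕜) := by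
  have : (Matrix.diagonal (RCLike.ofReal ∘ d) : Matrix m m 𝕜) - Matrix.diagonal (RCLike.ofReal ∘ e)
      = Matrix.diagonal (RCLike.ofReal ∘ fun i => d i - e i) := by
    rw [Matrix.diagonal_sub]; simp [Function.comp_def]
  rw [← this, Matrix.mul_sub, Matrix.sub_mul]

lemma one_sub_sqrt_psd_iff {P : Matrix m m 𝕜} (hP : P.PosSemidef) :
    (1 - hP.sqrt).PosSemidef ↔ (1 - P).PosSemidef := by
  set U := hP.1.eigenvectorUnitary with hU
  have hs : (1 : Matrix m m 𝕜) - hP.sqrt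
      = (U : Matrix m m 𝕜) * Matrix.diagonal (RCLike.ofReal ∘ fun i => 1 - Real.sqrt (hP.1.eigenvalues i)) * star (U : Matrix m m 𝕜) := by
    rw [Matrix.PosSemidef.sqrt, one_eq_unitary_conj U, ← hU]
    rw [unitary_conj_sub]
    rfl
  have hp : (1 : Matrix m m 𝕜) - P
      = (U : Matrix m m 𝕜) * Matrix.diagonal (RCLike.ofReal ∘ fun i => 1 - hP.1.eigenvalues i) * star (U : Matrix m m 𝕜) := by
    conv_lhs => rw [hP.1.spectral_theorem, Unitary.conjStarAlgAut_apply, one_eq_unitary_conj U]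
    rw [unitary_conj_sub]
  rw [hs, hp, unitary_conj_psd_iff, unitary_conj_psd_iff]
  constructor
  · intro h i
    have h1 := h i
    nlinarith [Real.sq_sqrt (hP.eigenvalues_nonneg i), Real.sqrt_nonneg (hP.1.eigenvalues i)]
  · intro h i
    have := Real.sqrt_le_one.mpr (by linarith [h i] : hP.1.eigenvalues i ≤ 1)
    linarith

lemma one_sub_sq_psd_iff {A : Matrix m m ℂ} (hA : A.IsHermitian) :
    (1 - A * A).PosSemidef ↔ ((1 + A).PosSemidef ∧ (1 - A).PosSemidef) := by
  set U := hA.eigenvectorUnitary with hU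
  have hUU : star (U : Matrix m m ℂ) * (U : Matrix m m ℂ) = 1 :=
    Matrix.mem_unitaryGroup_iff'.mp U.2
  have hDD : (Matrix.diagonal (RCLike.ofReal ∘ hA.eigenvalues) : Matrix m m ℂ) * Matrix.diagonal (RCLike.ofReal ∘ hA.eigenvalues)
      = Matrix.diagonal (RCLike.ofReal ∘ fun i => hA.eigenvalues i * hA.eigenvalues i) := by
    rw [Matrix.diagonal_mul_diagonal]; simp [Function.comp_def]
  have hsq : A * A = (U : Matrix m m ℂ)
      * Matrix.diagonal (RCLike.ofReal ∘ fun i => hA.eigenvalues i * hA.eigenvalues i)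
      * star (U : Matrix m m ℂ) := by
    conv_lhs => rw [hA.spectral_theorem, Unitary.conjStarAlgAut_apply]
    rw [show ((U : Matrix m m ℂ) * Matrix.diagonal (RCLike.ofReal ∘ hA.eigenvalues) * star (U : Matrix m m ℂ))
        * ((U : Matrix m m ℂ) * Matrix.diagonal (RCLike.ofReal ∘ hA.eigenvalues) * star (U : Matrix m m ℂ))
        = (U : Matrix m m ℂ) * (Matrix.diagonal (RCLike.ofReal ∘ hA.eigenvalues) * (star (U : Matrix m m ℂ) * (U : Matrix m m ℂ))
          * Matrix.diagonal (RCLike.ofReal ∘ hA.eigenvalues)) * star (U : Matrix m m ℂ) from by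
      simp only [Matrix.mul_assoc]]
    rw [hUU, Matrix.mul_one, hDD]
  have hsum : (1 : Matrix m m ℂ) + A
      = (U : Matrix m m ℂ) * Matrix.diagonal (RCLike.ofReal ∘ fun i => 1 + hA.eigenvalues i) * star (U : Matrix m m ℂ) := by
    conv_lhs => rw [hA.spectral_theorem, Unitary.conjStarAlgAut_apply, one_eq_unitary_conj U]
    have : (Matrix.diagonal (RCLike.ofReal ∘ fun _ : m => (1:ℝ)) : Matrix m m ℂ) + Matrix.diagonal (RCLike.ofReal ∘ hA.eigenvalues)
        = Matrix.diagonal (RCLike.ofReal ∘ fun i => 1 + hA.eigenvalues i) := by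
      rw [Matrix.diagonal_add]; simp [Function.comp_def]
    rw [← this, Matrix.mul_add, Matrix.add_mul]
  have hdiff : (1 : Matrix m m ℂ) - A
      = (U : Matrix m m ℂ) * Matrix.diagonal (RCLike.ofReal ∘ fun i => 1 - hA.eigenvalues i) * star (U : Matrix m m ℂ) := by
    conv_lhs => rw [hA.spectral_theorem, Unitary.conjStarAlgAut_apply, one_eq_unitary_conj U]
    rw [unitary_conj_sub]
  have hsqdiff : (1 : Matrix m m ℂ) - A * A
      = (U : Matrix m m ℂ) * Matrix.diagonal (RCLike.ofReal ∘ fun i => 1 - hA.eigenvalues i * hA.eigenvalues i) * star (U : Matrix m m ℂ) := by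
    rw [hsq, one_eq_unitary_conj U, unitary_conj_sub]
  rw [hsum, hdiff, hsqdiff, unitary_conj_psd_iff, unitary_conj_psd_iff, unitary_conj_psd_iff]
  constructor
  · intro h
    constructor <;> intro i <;> nlinarith [h i]
  · rintro ⟨h1, h2⟩ i
    nlinarith [h1 i, h2 i]

lemma posSemidef_map_complex_iff (B : Matrix m m ℝ) :
    (B.map Complex.ofReal).PosSemidef ↔ B.PosSemidef := by
  constructor
  · intro h
    refine Matrix.PosSemidef.of_dotProduct_mulVec_nonneg ?_ ?_
    · have h1 := h.1
      rw [Matrix.IsHermitian] at h1 ⊢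
      have : (B.map Complex.ofReal)ᴴ = Bᴴ.map Complex.ofReal := by
        rw [Matrix.conjTranspose_map Complex.ofReal (fun a => by simp [Complex.conj_ofReal])]
      rw [this] at h1
      exact Matrix.map_injective Complex.ofReal_injective h1
    · intro x
      have h2 := h.dotProduct_mulVec_nonneg (fun i => (x i : ℂ))
      have he : star (fun i => (x i : ℂ)) ⬝ᵥ (B.map Complex.ofReal *ᵥ fun i => (x i : ℂ))
          = ((star x ⬝ᵥ (B *ᵥ x) : ℝ) : ℂ) := by
        simp only [dotProduct, Matrix.mulVec, Pi.star_apply, Matrix.map_apply,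
          Complex.ofReal_sum, Complex.ofReal_mul, star_trivial]
        push_cast
        simp [Complex.conj_ofReal]
      rw [he] at h2
      simpa using (Complex.zero_le_real.mp h2)
  · intro h
    obtain ⟨C, hC⟩ : ∃ C : Matrix m m ℝ, B = Cᴴ * C :=
      ⟨h.sqrt, by rw [h.posSemidef_sqrt.1.eq, h.sqrt_mul_self]⟩
    rw [hC, show (Cᴴ * C).map Complex.ofReal = Cᴴ.map Complex.ofReal * C.map Complex.ofReal from
      Matrix.map_mul (f := Complex.ofRealHom)]
    rw [Matrix.conjTranspose_map Complex.ofReal (fun a => by simp [Complex.conj_ofReal])]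
    exact Matrix.posSemidef_conjTranspose_mul_self _

end helpers


/-- A real positive definite `V` satisfies the uncertainty relation `V + iΩ ≥ 0` iff
`V ≥ V # (Ωᵀ V⁻¹ Ω)` in the Löwner order. -/
theorem uncertainty_iff_geomMean (n : ℕ)
    (V : Matrix (Fin n ⊕ Fin n) (Fin n ⊕ Fin n) ℝ) (hV : V.PosDef) :
    (V.map Complex.ofReal + Complex.I • (symForm n).map Complex.ofReal).PosSemidef ↔
      (V - geomMean V ((symForm n)ᵀ * V⁻¹ * symForm n)).PosSemidef := by
  classical
  have hfstar : Function.Semiconj Complex.ofReal star star := fun a => by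
    simp [Complex.conj_ofReal]
  have hVps : V.PosSemidef := hV.posSemidef
  set T : Matrix (Fin n ⊕ Fin n) (Fin n ⊕ Fin n) ℝ := hVps.sqrt with hTdef
  have hTps : T.PosSemidef := hVps.posSemidef_sqrt
  have hTT : T * T = V := hVps.sqrt_mul_self
  have hTH : Tᴴ = T := hTps.1
  have hTt : Tᵀ = T := by rw [← Matrix.conjTranspose_eq_transpose_of_trivial]; exact hTH
  have hdetT : IsUnit T.det := by
    rw [isUnit_iff_ne_zero]
    intro h0
    have hd : V.det = 0 := by rw [← hTT, Matrix.det_mul, h0, mul_zero]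
    exact hV.det_pos.ne' hd
  have hTiT : T⁻¹ * T = 1 := Matrix.nonsing_inv_mul _ hdetT
  have hTTi : T * T⁻¹ = 1 := Matrix.mul_nonsing_inv _ hdetT
  have hTit : (T⁻¹)ᵀ = T⁻¹ := by rw [Matrix.transpose_nonsing_inv, hTt]
  have hΩt : (symForm n)ᵀ = -(symForm n) := by
    simp [symForm, Matrix.fromBlocks_transpose, Matrix.fromBlocks_neg]
  set W : Matrix (Fin n ⊕ Fin n) (Fin n ⊕ Fin n) ℝ := T⁻¹ * symForm n * T⁻¹ with hWdef
  have hWtform : Wᵀ = T⁻¹ * (symForm n)ᵀ * T⁻¹ := by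
    rw [hWdef, Matrix.transpose_mul, Matrix.transpose_mul, hTit]
    simp only [Matrix.mul_assoc]
  have hWt : Wᵀ = -W := by
    rw [hWtform, hΩt, hWdef]
    simp only [Matrix.neg_mul, Matrix.mul_neg]
  have hWH : Wᴴ = -W := by rw [Matrix.conjTranspose_eq_transpose_of_trivial, hWt]
  have hVinv : V⁻¹ = T⁻¹ * T⁻¹ := by rw [← hTT, Matrix.mul_inv_rev]
  -- RHS reduction
  have hmsV : msqrt V = T := by rw [msqrt, dif_pos hVps]; rfl
  have hPkey : T⁻¹ * ((symForm n)ᵀ * V⁻¹ * symForm n) * T⁻¹ = Wᴴ * W := by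
    rw [Matrix.conjTranspose_eq_transpose_of_trivial, hWtform, hWdef, hVinv]
    simp only [Matrix.mul_assoc]
  have hPps : (Wᴴ * W).PosSemidef := Matrix.posSemidef_conjTranspose_mul_self W
  have hmsP : msqrt (T⁻¹ * ((symForm n)ᵀ * V⁻¹ * symForm n) * T⁻¹) = hPps.sqrt := by
    rw [hPkey, msqrt, dif_pos hPps]; rfl
  have hconjT : ∀ X : Matrix (Fin n ⊕ Fin n) (Fin n ⊕ Fin n) ℝ,
      (T * X * T).PosSemidef ↔ X.PosSemidef := by
    intro X
    have := psd_conj_iff T hdetT X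
    rwa [hTH] at this
  have hgeom : V - geomMean V ((symForm n)ᵀ * V⁻¹ * symForm n) = T * (1 - hPps.sqrt) * T := by
    rw [geomMean, hmsV, hmsP, Matrix.mul_sub, Matrix.sub_mul, Matrix.mul_one, hTT]
  -- LHS reduction
  set Tc : Matrix (Fin n ⊕ Fin n) (Fin n ⊕ Fin n) ℂ := T.map Complex.ofReal with hTc
  have hTcH : Tcᴴ = Tc := by
    rw [hTc, ← Matrix.conjTranspose_map Complex.ofReal hfstar, hTH]
  have hdetTc : IsUnit Tc.det := by
    have hd : Tc.det = Complex.ofReal T.det := (RingHom.map_det Complex.ofRealHom T).symm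
    rw [isUnit_iff_ne_zero, hd, ne_eq, Complex.ofReal_eq_zero]
    exact isUnit_iff_ne_zero.mp hdetT
  have hmul_oR : ∀ (M N : Matrix (Fin n ⊕ Fin n) (Fin n ⊕ Fin n) ℝ),
      (M * N).map Complex.ofReal = M.map Complex.ofReal * N.map Complex.ofReal :=
    fun M N => Matrix.map_mul (f := Complex.ofRealHom)
  have hTWT : T * W * T = symForm n := by
    have e : T * (T⁻¹ * symForm n * T⁻¹) * T = (T * T⁻¹) * (symForm n * (T⁻¹ * T)) := by
      simp only [Matrix.mul_assoc]
    rw [hWdef, e, hTTi, hTiT, Matrix.one_mul, Matrix.mul_one]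
  set A : Matrix (Fin n ⊕ Fin n) (Fin n ⊕ Fin n) ℂ := Complex.I • W.map Complex.ofReal with hA
  have hkey : V.map Complex.ofReal + Complex.I • (symForm n).map Complex.ofReal
      = Tc * (1 + A) * Tc := by
    rw [Matrix.mul_add, Matrix.add_mul, Matrix.mul_one]
    congr 1
    · rw [hTc, ← hmul_oR, hTT]
    · rw [hA, Matrix.mul_smul, Matrix.smul_mul]
      congr 1
      rw [hTc, ← hmul_oR, ← hmul_oR, hTWT]
  have hWcH : (W.map Complex.ofReal)ᴴ = -(W.map Complex.ofReal) := by
    rw [← Matrix.conjTranspose_map Complex.ofReal hfstar, hWH]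
    ext i j
    simp [Matrix.map_apply]
  have hAH : A.IsHermitian := by
    rw [Matrix.IsHermitian, hA, Matrix.conjTranspose_smul, hWcH, Complex.star_def, Complex.conj_I]
    rw [smul_neg, neg_smul, neg_neg]
  have hAt : (1 : Matrix (Fin n ⊕ Fin n) (Fin n ⊕ Fin n) ℂ) - A = (1 + A)ᵀ := by
    have hWct : (W.map Complex.ofReal)ᵀ = -(W.map Complex.ofReal) := by
      rw [← Matrix.transpose_map, hWt]
      ext i j
      simp [Matrix.map_apply]
    rw [Matrix.transpose_add, Matrix.transpose_one, hA, Matrix.transpose_smul, hWct]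
    rw [smul_neg, sub_eq_add_neg]
  have honemap : ∀ X : Matrix (Fin n ⊕ Fin n) (Fin n ⊕ Fin n) ℝ,
      (1 - X).map Complex.ofReal = 1 - X.map Complex.ofReal := by
    intro X
    ext i j
    by_cases h : i = j <;> simp [Matrix.map_apply, Matrix.one_apply, h]
  have hAA : (1 : Matrix (Fin n ⊕ Fin n) (Fin n ⊕ Fin n) ℂ) - A * A
      = (1 - Wᴴ * W).map Complex.ofReal := by
    have h1 : A * A = (Complex.I * Complex.I) • (W.map Complex.ofReal * W.map Complex.ofReal) := by
      rw [hA, Matrix.smul_mul, Matrix.mul_smul, smul_smul]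
    have hnegmap : (-(W * W)).map Complex.ofReal = -((W * W).map Complex.ofReal) := by
      ext i j; simp [Matrix.map_apply]
    rw [h1, Complex.I_mul_I, neg_one_smul, sub_neg_eq_add]
    rw [honemap, hWH, Matrix.neg_mul, hnegmap, sub_neg_eq_add, hmul_oR W W]
  rw [hkey, hgeom]
  have hconjTc := psd_conj_iff Tc hdetTc (1 + A)
  rw [hTcH] at hconjTc
  rw [hconjTc, hconjT, one_sub_sqrt_psd_iff hPps]
  constructor
  · intro h1
    have h2 : ((1 : Matrix (Fin n ⊕ Fin n) (Fin n ⊕ Fin n) ℂ) - A).PosSemidef := by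
      rw [hAt]; exact h1.transpose
    have h3 := (one_sub_sq_psd_iff hAH).mpr ⟨h1, h2⟩
    rw [hAA] at h3
    exact (posSemidef_map_complex_iff _).mp h3
  · intro h
    exact ((one_sub_sq_psd_iff hAH).mp (by rw [hAA]; exact (posSemidef_map_complex_iff _).mpr h)).1
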